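/- Let 𝔸 be a countable atomless Boolean algebra, let 𝔄 be a finite subalgebra of 𝔸, let p : 𝔄 → [0,1] ∩ ℚ be a normalised submeasure, and let n ∈ ℕ. Then there exist a finite subalgebra ℭ of 𝔸 containing 𝔄 and a normalised submeasure q : ℭ → [0,1] ∩ ℚ extending p that is n-pathological, i.e. there are pairwise disjoint a₁, ..., aₙ ∈ ℭ with q(aᵢ) = 1 for every i. -/

import Mathlib

/-- `S` is a (Boolean) subalgebra of the Boolean algebra `A`. -/
def IsBoolSubalgebra {A : Type*} [BooleanAlgebra A] (S : Set A) : Prop :=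
  ⊥ ∈ S ∧ ⊤ ∈ S ∧ (∀ x ∈ S, ∀ y ∈ S, x ⊔ y ∈ S) ∧
    (∀ x ∈ S, ∀ y ∈ S, x ⊓ y ∈ S) ∧ (∀ x ∈ S, xᶜ ∈ S)

lemma split_piece {A : Type*} [BooleanAlgebra A] (hat : ∀ a : A, ¬ IsAtom a) :
    ∀ n : ℕ, 1 ≤ n → ∀ t : A, t ≠ ⊥ →
    ∃ d : Fin n → A, (∀ i, d i ≠ ⊥) ∧ (∀ i, d i ≤ t) ∧
      (∀ i j, i ≠ j → d i ⊓ d j = ⊥) ∧ Finset.univ.sup d = t := by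
  intro n
  induction n with
  | zero => omega
  | succ m ih =>
    intro _ t ht
    rcases Nat.eq_zero_or_pos m with hm | hm
    · subst hm
      refine ⟨fun _ => t, fun _ => ht, fun _ => le_rfl, ?_, ?_⟩
      · intro i j hij; fin_cases i <;> fin_cases j <;> simp at hij
      · simp
    · have hA := hat t
      rw [IsAtom] at hA
      push_neg at hA
      obtain ⟨b, hbt, hb0⟩ := hA ht
      have htb : t \ b ≠ ⊥ := by
        rw [Ne, sdiff_eq_bot_iff]
        exact fun h => absurd h hbt.not_ge
      obtain ⟨d, hd0, hdle, hdd, hsup⟩ := ih hm (t \ b) htb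
      have hkey : ∀ j : Fin m, b ⊓ d j = ⊥ := fun j =>
        le_bot_iff.mp ((inf_le_inf_left b (hdle j)).trans (le_of_eq inf_sdiff_self_right))
      refine ⟨Fin.cons b d, ?_, ?_, ?_, ?_⟩
      · intro i
        refine Fin.cases hb0 (fun j => hd0 j) i
      · intro i
        refine Fin.cases hbt.le (fun j => (hdle j).trans sdiff_le) i
      · intro i j
        refine Fin.cases ?_ (fun i' => ?_) i
        · refine Fin.cases ?_ (fun j' => ?_) j
          · intro h; simp at h
          · intro _; simpa using hkey j'
        · refine Fin.cases ?_ (fun j' => ?_) j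
          · intro _; simpa [inf_comm] using hkey i'
          · intro h
            have : i' ≠ j' := fun hh => h (by simp [hh])
            simpa using hdd i' j' this
      · have hc : (Fin.cons b d : Fin (m+1) → A) ∘ (Fin.succEmb m) = d := by
          funext j; simp [Fin.succEmb]
        rw [Fin.univ_succ, Finset.sup_cons, Finset.sup_map]
        simp only [Fin.cons_zero, Function.Embedding.coeFn_mk, Fin.succEmb]
        rw [show ((Fin.cons b d : Fin (m+1) → A) ∘ Fin.succ) = d from funext fun j => by simp]
        rw [hsup, sup_sdiff_cancel_right hbt.le]

lemma finsup_mem {A : Type*} [BooleanAlgebra A] {S : Set A} (hbot : ⊥ ∈ S)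
    (hsup : ∀ x ∈ S, ∀ y ∈ S, x ⊔ y ∈ S) (F : Finset A) (hF : ∀ x ∈ F, x ∈ S) :
    F.sup id ∈ S := by
  classical
  induction F using Finset.induction with
  | empty => simpa using hbot
  | insert _ _ h ih =>
    rw [Finset.sup_insert]
    exact hsup _ (hF _ (Finset.mem_insert_self _ _)) _
      (ih fun x hx => hF x (Finset.mem_insert_of_mem hx))

lemma fininf_mem {A : Type*} [BooleanAlgebra A] {S : Set A} (htop : ⊤ ∈ S)
    (hinf : ∀ x ∈ S, ∀ y ∈ S, x ⊓ y ∈ S) (F : Finset A) (hF : ∀ x ∈ F, x ∈ S) :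
    F.inf id ∈ S := by
  classical
  induction F using Finset.induction with
  | empty => simpa using htop
  | insert _ _ h ih =>
    rw [Finset.inf_insert]
    exact hinf _ (hF _ (Finset.mem_insert_self _ _)) _
      (ih fun x hx => hF x (Finset.mem_insert_of_mem hx))

lemma exists_min_elt {A : Type*} [BooleanAlgebra A] {S : Set A} (hSfin : S.Finite)
    {c : A} (hc : c ∈ S) (hc0 : c ≠ ⊥) :
    ∃ t ∈ S, t ≠ ⊥ ∧ (∀ s ∈ S, s < t → s = ⊥) ∧ t ≤ c := by
  classical
  set F := hSfin.toFinset.filter (fun s => s ≠ ⊥ ∧ s ≤ c) with hF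
  have hne : F.Nonempty := ⟨c, by simp [hF, hSfin.mem_toFinset, hc, hc0]⟩
  obtain ⟨m, hmF, hmin⟩ := F.exists_minimal hne
  rw [hF, Finset.mem_filter, hSfin.mem_toFinset] at hmF
  refine ⟨m, hmF.1, hmF.2.1, ?_, hmF.2.2⟩
  intro s hs hsm
  by_contra hs0
  refine hsm.not_ge (hmin (?_ : s ∈ F) hsm.le)
  rw [hF, Finset.mem_filter, hSfin.mem_toFinset]
  exact ⟨hs, hs0, hsm.le.trans hmF.2.2⟩

theorem statement3 (A : Type*) [BooleanAlgebra A] [Countable A] [Nontrivial A]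
    (hatomless : ∀ a : A, ¬ IsAtom a)
    (S : Set A) (hS : IsBoolSubalgebra S) (hSfin : S.Finite)
    (p : A → ℝ)
    (hp0 : p ⊥ = 0) (hp1 : p ⊤ = 1)
    (hpmono : ∀ a ∈ S, ∀ b ∈ S, a ≤ b → p a ≤ p b)
    (hpsub : ∀ a ∈ S, ∀ b ∈ S, p (a ⊔ b) ≤ p a + p b)
    (hprange : ∀ a ∈ S, (0 ≤ p a ∧ p a ≤ 1) ∧ ∃ q : ℚ, p a = (q : ℝ))
    (n : ℕ) (hn : 1 ≤ n) :
    ∃ C : Set A, IsBoolSubalgebra C ∧ C.Finite ∧ S ⊆ C ∧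
      ∃ q : A → ℝ,
        q ⊥ = 0 ∧ q ⊤ = 1 ∧
        (∀ a ∈ C, ∀ b ∈ C, a ≤ b → q a ≤ q b) ∧
        (∀ a ∈ C, ∀ b ∈ C, q (a ⊔ b) ≤ q a + q b) ∧
        (∀ a ∈ C, (0 ≤ q a ∧ q a ≤ 1) ∧ ∃ r : ℚ, q a = (r : ℝ)) ∧
        (∀ a ∈ S, q a = p a) ∧
        ∃ a : Fin n → A, (∀ i, a i ∈ C) ∧
          (∀ i j, i ≠ j → a i ⊓ a j = ⊥) ∧ (∀ i, q (a i) = 1) := by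
  classical
  obtain ⟨hbotS, htopS, hsupS, hinfS, hcomplS⟩ := hS
  -- the projection to the smallest element of S above a given element
  set π : A → A := fun c => ((hSfin.toFinset.filter (fun b => c ≤ b)).inf id) with hπ
  have hπS : ∀ c, π c ∈ S := by
    intro c
    refine fininf_mem htopS hinfS _ (fun x hx => ?_)
    exact hSfin.mem_toFinset.mp (Finset.mem_filter.mp hx).1
  have hleπ : ∀ c, c ≤ π c := by
    intro c
    exact Finset.le_inf fun b hb => (Finset.mem_filter.mp hb).2
  have hπle : ∀ c, ∀ b ∈ S, c ≤ b → π c ≤ b := by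
    intro c b hb hcb
    exact Finset.inf_le (Finset.mem_filter.mpr ⟨hSfin.mem_toFinset.mpr hb, hcb⟩)
  have hπid : ∀ b ∈ S, π b = b := fun b hb => le_antisymm (hπle b b hb le_rfl) (hleπ b)
  have hπmono : ∀ c d : A, c ≤ d → π c ≤ π d := by
    intro c d h
    refine Finset.le_inf fun b hb => ?_
    obtain ⟨hb1, hb2⟩ := Finset.mem_filter.mp hb
    exact hπle c b (hSfin.mem_toFinset.mp hb1) (h.trans hb2)
  have hπsup : ∀ c d : A, π (c ⊔ d) = π c ⊔ π d := by
    intro c d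
    refine le_antisymm (hπle _ _ (hsupS _ (hπS c) _ (hπS d))
      (sup_le_sup (hleπ c) (hleπ d))) ?_
    exact sup_le (hπmono _ _ le_sup_left) (hπmono _ _ le_sup_right)
  -- the minimal nonzero elements of S
  set Tfin : Finset A := hSfin.toFinset.filter
    (fun t => t ≠ ⊥ ∧ ∀ s ∈ S, s < t → s = ⊥) with hTfin
  have hTmem : ∀ t ∈ Tfin, t ∈ S ∧ t ≠ ⊥ ∧ ∀ s ∈ S, s < t → s = ⊥ := by
    intro t ht
    rw [hTfin, Finset.mem_filter, hSfin.mem_toFinset] at ht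
    exact ht
  have hTex : ∀ c ∈ S, c ≠ ⊥ → ∃ t ∈ Tfin, t ≤ c := by
    intro c hc hc0
    obtain ⟨t, ht, ht0, htmin, htc⟩ := exists_min_elt hSfin hc hc0
    exact ⟨t, by rw [hTfin, Finset.mem_filter, hSfin.mem_toFinset]
                 exact ⟨ht, ht0, htmin⟩, htc⟩
  have hTdisj : ∀ t ∈ Tfin, ∀ t' ∈ Tfin, t ≠ t' → t ⊓ t' = ⊥ := by
    intro t ht t' ht' htt'
    obtain ⟨htS, ht0, htmin⟩ := hTmem t ht
    obtain ⟨ht'S, ht'0, ht'min⟩ := hTmem t' ht'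
    rcases lt_or_eq_of_le (inf_le_left : t ⊓ t' ≤ t) with h | h
    · exact htmin _ (hinfS _ htS _ ht'S) h
    · have htt : t ≤ t' := h ▸ inf_le_right
      rcases lt_or_eq_of_le htt with h2 | h2
      · exact absurd (ht'min _ htS h2) ht0
      · exact absurd h2 htt'
  -- split each minimal element into n pieces
  have hsplit : ∀ t : A, ∃ e : Fin n → A, t ≠ ⊥ → (∀ i, e i ≠ ⊥) ∧ (∀ i, e i ≤ t) ∧
      (∀ i j, i ≠ j → e i ⊓ e j = ⊥) ∧ Finset.univ.sup e = t := by
    intro t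
    by_cases ht : t = ⊥
    · exact ⟨fun _ => ⊥, fun h => (h ht).elim⟩
    · obtain ⟨e, he⟩ := split_piece hatomless n hn t ht
      exact ⟨e, fun _ => he⟩
  choose d hd using hsplit
  -- all pieces
  set AllP : Finset A := Tfin.biUnion (fun t => Finset.image (d t) Finset.univ) with hAllP
  have hAllPmem : ∀ x, x ∈ AllP ↔ ∃ t ∈ Tfin, ∃ i : Fin n, d t i = x := by
    intro x
    simp [hAllP, Finset.mem_biUnion, Finset.mem_image]
  have hPdisj : ∀ x ∈ AllP, ∀ y ∈ AllP, x ≠ y → x ⊓ y = ⊥ := by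
    intro x hx y hy hxy
    obtain ⟨t, ht, i, hi⟩ := (hAllPmem x).mp hx
    obtain ⟨t', ht', j, hj⟩ := (hAllPmem y).mp hy
    subst hi; subst hj
    rcases eq_or_ne t t' with h | h
    · subst h
      have hij : i ≠ j := fun hh => hxy (by rw [hh])
      exact (hd t (hTmem t ht).2.1).2.2.1 i j hij
    · have h1 : d t i ≤ t := (hd t (hTmem t ht).2.1).2.1 i
      have h2 : d t' j ≤ t' := (hd t' (hTmem t' ht').2.1).2.1 j
      exact le_bot_iff.mp ((inf_le_inf h1 h2).trans (le_of_eq (hTdisj t ht t' ht' h)))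
  have hsupP : ∀ t ∈ Tfin, (Finset.image (d t) Finset.univ).sup id = t := by
    intro t ht
    rw [Finset.sup_image]
    exact (hd t (hTmem t ht).2.1).2.2.2
  -- every element of S is the sup of the minimal elements below it
  have hSsup : ∀ b ∈ S, (Tfin.filter (fun t => t ≤ b)).sup id = b := by
    intro b hb
    set v := (Tfin.filter (fun t => t ≤ b)).sup id with hv
    have hvS : v ∈ S := finsup_mem hbotS hsupS _ (fun x hx =>
      (hTmem x (Finset.mem_filter.mp hx).1).1)
    have hvb : v ≤ b := Finset.sup_le fun t ht => (Finset.mem_filter.mp ht).2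
    refine le_antisymm hvb ?_
    by_contra hbv
    have hw0 : b ⊓ vᶜ ≠ ⊥ := by
      rw [← sdiff_eq, Ne, sdiff_eq_bot_iff]
      exact hbv
    obtain ⟨t, ht, htw⟩ := hTex _ (hinfS _ hb _ (hcomplS _ hvS)) hw0
    have h1 : t ≤ v := Finset.le_sup (f := id)
      (Finset.mem_filter.mpr ⟨ht, htw.trans inf_le_left⟩)
    have h2 : t ≤ vᶜ := htw.trans inf_le_right
    exact (hTmem t ht).2.1 (le_bot_iff.mp (le_inf h1 h2 |>.trans (le_of_eq inf_compl_eq_bot)))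
  have hAllPsup : AllP.sup id = ⊤ := by
    rw [hAllP, Finset.sup_biUnion]
    have h1 : Tfin.sup (fun t => (Finset.image (d t) Finset.univ).sup id) = Tfin.sup id :=
      Finset.sup_congr rfl (fun t ht => hsupP t ht)
    rw [h1]
    have h2 : Tfin.filter (fun t => t ≤ (⊤ : A)) = Tfin :=
      Finset.filter_true_of_mem (fun t _ => le_top)
    have := hSsup ⊤ htopS
    rw [h2] at this
    exact this
  -- the subalgebra C
  set C : Set A := { x : A | ∃ F : Finset A, F ⊆ AllP ∧ x = F.sup id } with hC
  have hinfF : ∀ F G : Finset A, F ⊆ AllP → G ⊆ AllP →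
      (F.sup id) ⊓ (G.sup id) = (F ∩ G).sup id := by
    intro F G hF hG
    refine le_antisymm ?_ ?_
    · rw [Finset.sup_inf_distrib_right]
      refine Finset.sup_le fun x hx => ?_
      rw [Finset.sup_inf_distrib_left]
      refine Finset.sup_le fun y hy => ?_
      rcases eq_or_ne x y with h | h
      · subst h
        simpa using Finset.le_sup (f := id) (Finset.mem_inter.mpr ⟨hx, hy⟩)
      · simp only [id]
        rw [hPdisj x (hF hx) y (hG hy) h]
        exact bot_le
    · refine Finset.sup_le fun x hx => ?_
      obtain ⟨h1, h2⟩ := Finset.mem_inter.mp hx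
      exact le_inf (Finset.le_sup (f := id) h1) (Finset.le_sup (f := id) h2)
  have hCsub : IsBoolSubalgebra C := by
    refine ⟨⟨∅, Finset.empty_subset _, Finset.sup_empty.symm⟩,
      ⟨AllP, subset_rfl, hAllPsup.symm⟩, ?_, ?_, ?_⟩
    · rintro x ⟨F, hF, rfl⟩ y ⟨G, hG, rfl⟩
      exact ⟨F ∪ G, Finset.union_subset hF hG, (Finset.sup_union).symm⟩
    · rintro x ⟨F, hF, rfl⟩ y ⟨G, hG, rfl⟩
      exact ⟨F ∩ G, (Finset.inter_subset_left).trans hF, hinfF F G hF hG⟩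
    · rintro x ⟨F, hF, rfl⟩
      refine ⟨AllP \ F, Finset.sdiff_subset, ?_⟩
      have hcompl : IsCompl (F.sup id) ((AllP \ F).sup id) := by
        constructor
        · rw [disjoint_iff, hinfF F (AllP \ F) hF Finset.sdiff_subset,
            Finset.inter_sdiff_self, Finset.sup_empty]
        · rw [codisjoint_iff, ← Finset.sup_union, Finset.union_sdiff_of_subset hF, hAllPsup]
      exact hcompl.compl_eq
  have hCfin : C.Finite := by
    refine Set.Finite.subset (AllP.powerset.image (fun F => F.sup id)).finite_toSet ?_
    rintro x ⟨F, hF, rfl⟩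
    simp only [Finset.coe_image, Set.mem_image, Finset.mem_coe, Finset.mem_powerset]
    exact ⟨F, hF, rfl⟩
  have hSC : S ⊆ C := by
    intro b hb
    refine ⟨(Tfin.filter (fun t => t ≤ b)).biUnion (fun t => Finset.image (d t) Finset.univ),
      ?_, ?_⟩
    · exact Finset.biUnion_subset_biUnion_of_subset_left _ (Finset.filter_subset _ _)
    · rw [Finset.sup_biUnion]
      rw [Finset.sup_congr rfl (fun t ht => hsupP t ((Finset.filter_subset _ _) ht))]
      exact (hSsup b hb).symm
  -- the pathological elements
  set a : Fin n → A := fun i => Tfin.sup (fun t => d t i) with ha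
  have haC : ∀ i, a i ∈ C := by
    intro i
    refine ⟨Tfin.image (fun t => d t i), ?_, ?_⟩
    · intro x hx
      obtain ⟨t, ht, rfl⟩ := Finset.mem_image.mp hx
      exact (hAllPmem _).mpr ⟨t, ht, i, rfl⟩
    · rw [Finset.sup_image]; rfl
  have hadisj : ∀ i j, i ≠ j → a i ⊓ a j = ⊥ := by
    intro i j hij
    refine le_antisymm ?_ bot_le
    rw [ha]
    rw [Finset.sup_inf_distrib_right]
    refine Finset.sup_le fun t ht => ?_
    rw [Finset.sup_inf_distrib_left]
    refine Finset.sup_le fun t' ht' => ?_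
    rcases eq_or_ne t t' with h | h
    · subst h
      exact le_of_eq ((hd t (hTmem t ht).2.1).2.2.1 i j hij)
    · have h1 : d t i ≤ t := (hd t (hTmem t ht).2.1).2.1 i
      have h2 : d t' j ≤ t' := (hd t' (hTmem t' ht').2.1).2.1 j
      exact (inf_le_inf h1 h2).trans (le_of_eq (hTdisj t ht t' ht' h))
  have haπ : ∀ i, π (a i) = ⊤ := by
    intro i
    by_contra hne
    have h0 : (π (a i))ᶜ ≠ ⊥ := by
      rw [Ne, compl_eq_bot]; exact hne
    obtain ⟨t, ht, htc⟩ := hTex _ (hcomplS _ (hπS (a i))) h0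
    have hd0 : d t i ≠ ⊥ := (hd t (hTmem t ht).2.1).1 i
    have h1 : d t i ≤ π (a i) := le_trans (le_trans (Finset.le_sup (f := fun t => d t i) ht) le_rfl) (hleπ (a i))
    have h2 : d t i ≤ (π (a i))ᶜ := le_trans ((hd t (hTmem t ht).2.1).2.1 i) htc
    exact hd0 (le_bot_iff.mp ((le_inf h1 h2).trans (le_of_eq inf_compl_eq_bot)))
  -- the submeasure q
  refine ⟨C, hCsub, hCfin, hSC, fun c => p (π c), ?_, ?_, ?_, ?_, ?_, ?_, a, haC, hadisj, ?_⟩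
  · show p (π ⊥) = 0
    rw [hπid ⊥ hbotS, hp0]
  · show p (π ⊤) = 1
    rw [hπid ⊤ htopS, hp1]
  · intro x _ y _ hxy
    exact hpmono _ (hπS x) _ (hπS y) (hπmono _ _ hxy)
  · intro x _ y _
    show p (π (x ⊔ y)) ≤ p (π x) + p (π y)
    rw [hπsup]
    exact hpsub _ (hπS x) _ (hπS y)
  · intro x _
    exact hprange _ (hπS x)
  · intro x hx
    show p (π x) = p x
    rw [hπid x hx]
  · intro i
    show p (π (a i)) = 1
    rw [haπ i]; exact hp1
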